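/- (Taylor's formula for fields) Let A(y,z) be a field in two variables on M. Then for every positive integer N there exists a unique field R_N(y,z) such that A(y,z) = ∑_{i=0}^{N−1} (∂_y^{(i)}A(y,z))|_{y=z} (y−z)^i + R_N(y,z)(y−z)^N. -/

import Mathlib

open Finset

section VA

variable {k M : Type*} [Field k] [CharZero k] [AddCommGroup M] [Module k M]

/-- Generalized binomial coefficient `C(n,i)` for `n : ℤ`, `i : ℕ`. -/
def ichoose (n : ℤ) (i : ℕ) : ℤ :=
  if 0 ≤ n then (n.toNat.choose i : ℤ)
  else (-1) ^ i * ((((i : ℤ) - 1 - n).toNat.choose i : ℤ))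

/-- `(-1)^m` for an integer `m`. -/
def msign (m : ℤ) : ℤ := if Even m then 1 else -1

/-- A series on `M`, given by its Fourier modes `A_n`. -/
abbrev Ser (M : Type*) : Type _ := ℤ → M → M

/-- `A(z)` is a field: modes applied to any vector vanish for large index. -/
def IsFieldSer (A : Ser M) : Prop := ∀ v : M, ∃ n₀ : ℤ, ∀ n ≥ n₀, A n v = 0

/-- All modes are `k`-linear, i.e. the coefficients are endomorphisms of the
vector space `M`. -/
def IsLinSer (A : Ser M) : Prop := ∀ n : ℤ, IsLinearMap k (A n)

/-- Residual `m`-th product, in Fourier modes: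
`(A_(m)B)_n = ∑_{i≥0} (-1)^i C(m,i) (A_{m-i} B_{n+i} - (-1)^m B_{m+n-i} A_i)`. -/
noncomputable def resProd (A B : Ser M) (m : ℤ) : Ser M := fun n v =>
  ∑ᶠ i : ℕ, ((-1 : ℤ) ^ i * ichoose m i) •
    (A (m - (i : ℤ)) (B (n + (i : ℤ)) v) - msign m • B (m + n - (i : ℤ)) (A (i : ℤ) v))

/-- Mutual locality at order `n`, in Fourier modes:
`∑_{i=0}^n (-1)^i C(n,i) (A_{p+n-i} B_{q+i} - (-1)^n B_{q+n-i} A_{p+i}) = 0`. -/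
def IsLocalAt (A B : Ser M) (n : ℕ) : Prop :=
  ∀ (p q : ℤ) (v : M),
    ∑ i ∈ Finset.range (n + 1), ((-1 : ℤ) ^ i * (n.choose i : ℤ)) •
      (A (p + (n : ℤ) - (i : ℤ)) (B (q + (i : ℤ)) v)
        - (-1 : ℤ) ^ n • B (q + (n : ℤ) - (i : ℤ)) (A (p + (i : ℤ)) v)) = 0

/-- `A` and `B` are mutually local of order exactly `n₀`. -/
def HasOrder (A B : Ser M) (n₀ : ℕ) : Prop :=
  IsLocalAt A B n₀ ∧ ∀ n : ℕ, IsLocalAt A B n → n₀ ≤ n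

/-- The identity field `I(z) = id`. -/
def idSer : Ser M := fun n v => if n = -1 then v else 0

/-- Derivative of a series: `(∂A)_n = -n A_{n-1}`. -/
def dSer (A : Ser M) : Ser M := fun n v => (-n) • A (n - 1) v

/-- Divided-power derivative: `(∂^{(i)}A)_n = (-1)^i C(n,i) A_{n-i}`. -/
def dpowSer (i : ℕ) (A : Ser M) : Ser M := fun n v =>
  ((-1 : ℤ) ^ i * ichoose n i) • A (n - (i : ℤ)) v

/-- Normally ordered product `:A(z)B(z): = A(z)₋B(z) + B(z)A(z)₊`, in modes. -/
noncomputable def noProd (A B : Ser M) : Ser M := fun n v =>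
  (∑ᶠ i : ℕ, A (-(i : ℤ) - 1) (B (n + (i : ℤ)) v)) + ∑ᶠ i : ℕ, B (n - 1 - (i : ℤ)) (A (i : ℤ) v)

/-- A two-variable series is a field if for every vector all modes with either index
large enough kill it. -/
def IsFieldSer2 (A : ℤ → ℤ → M → M) : Prop :=
  ∀ u : M, ∃ p₀ q₀ : ℤ, ∀ p q : ℤ, (p₀ ≤ p ∨ q₀ ≤ q) → A p q u = 0

/-- All modes of a two-variable series are `k`-linear. -/
def IsLinSer2 (A : ℤ → ℤ → M → M) : Prop := ∀ p q : ℤ, IsLinearMap k (A p q)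

/-- Coefficientwise multiplication of a two-variable series by `(y - z)`. -/
def mulYZ (R : ℤ → ℤ → M → M) : ℤ → ℤ → M → M :=
  fun p q u => R (p + 1) q u - R p (q + 1) u

/-- Coefficient of `y^{-p-1}z^{-q-1}` (applied to `u`) of
`(∂_y^{(i)}A)(y,z)|_{y=z} · (y-z)^i`;  here `(∂_y^{(i)}A)|_{y=z}` is the one-variable
field with `z^{-t'-1}`-coefficient `∑_t (-1)^i C(t,i) A_{t-i, t'-1-t}`. -/
noncomputable def taylorTerm (A : ℤ → ℤ → M → M) (i : ℕ) (p q : ℤ) (u : M) : M :=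
  if 0 ≤ p + (i : ℤ) + 1 ∧ p + 1 ≤ 0 then
    ((-1 : ℤ) ^ ((p + (i : ℤ) + 1).toNat) * (i.choose (p + (i : ℤ) + 1).toNat : ℤ)) •
      ∑ᶠ t : ℤ, ((-1 : ℤ) ^ i * ichoose t i) •
        A (t - (i : ℤ)) ((q + ((p + (i : ℤ) + 1).toNat : ℤ)) - 1 - t) u
  else 0

set_option linter.unusedSectionVars false

lemma ichoose_zero_right (n : ℤ) : ichoose n 0 = 1 := by
  unfold ichoose; split <;> simp

lemma ichoose_of_neg {n : ℤ} (i : ℕ) (h : n < 0) :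
    ichoose n i = (-1) ^ i * ((((i : ℤ) - 1 - n).toNat.choose i : ℤ)) := by
  rw [ichoose, if_neg (by omega)]

lemma ichoose_of_nonneg {n : ℤ} (i : ℕ) (h : 0 ≤ n) :
    ichoose n i = (n.toNat.choose i : ℤ) := by
  rw [ichoose, if_pos h]

lemma ichoose_pascal (n : ℤ) (i : ℕ) :
    ichoose (n + 1) (i + 1) = ichoose n (i + 1) + ichoose n i := by
  rcases le_or_gt 0 n with h | h
  · rw [ichoose_of_nonneg _ (by omega), ichoose_of_nonneg _ h, ichoose_of_nonneg _ h]
    have hn : (n + 1).toNat = n.toNat + 1 := by omega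
    rw [hn, Nat.choose_succ_succ]
    push_cast; ring
  rcases eq_or_lt_of_le (by omega : n + 1 ≤ 0) with h1 | h1
  · have hn : n = -1 := by omega
    subst hn
    norm_num
    rw [ichoose_of_nonneg _ (by norm_num), ichoose_of_neg _ (by norm_num),
      ichoose_of_neg _ (by norm_num)]
    have e1 : (((i + 1 : ℕ) : ℤ) - 1 - -1).toNat = i + 1 := by push_cast; omega
    have e2 : ((i : ℤ) - 1 - -1).toNat = i := by omega
    rw [e1, e2, Nat.choose_self, Nat.choose_self,
      Nat.choose_eq_zero_of_lt (by omega : (0:ℤ).toNat < i + 1), pow_succ]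
    push_cast; ring
  · rw [ichoose_of_neg _ (by omega), ichoose_of_neg _ (by omega), ichoose_of_neg _ (by omega)]
    set a : ℕ := ((i : ℤ) - 1 - n).toNat with ha
    have e1 : (((i + 1 : ℕ) : ℤ) - 1 - (n + 1)).toNat = a := by push_cast; omega
    have e2 : (((i + 1 : ℕ) : ℤ) - 1 - n).toNat = a + 1 := by push_cast; omega
    rw [e1, e2, Nat.choose_succ_succ]
    push_cast [pow_succ]; ring

lemma ichoose_pascal' (t : ℤ) (i : ℕ) :
    (-1 : ℤ) ^ (i + 1) * ichoose t (i + 1) =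
      (-1 : ℤ) ^ i * ichoose t i + (-1 : ℤ) ^ (i + 1) * ichoose (t + 1) (i + 1) := by
  have h := ichoose_pascal t i
  rw [h]; ring

private lemma finsum_int_eq_sum_Icc (g : ℤ → M) (a b : ℤ) (h : ∀ t, g t ≠ 0 → a ≤ t ∧ t ≤ b) :
    ∑ᶠ t, g t = ∑ t ∈ Finset.Icc a b, g t :=
  finsum_eq_sum_of_support_subset g (by
    intro t ht
    simp only [Finset.coe_Icc, Set.mem_Icc]
    exact h t ht)

private lemma finsum_nat_eq_sum_range (g : ℕ → M) (n : ℕ) (h : ∀ s, g s ≠ 0 → s < n) :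
    ∑ᶠ s, g s = ∑ s ∈ Finset.range n, g s :=
  finsum_eq_sum_of_support_subset g (by
    intro s hs
    simp only [Finset.coe_range, Set.mem_Iio]
    exact h s hs)

private lemma sum_Icc_eq_sum_range (g : ℤ → M) (c : ℤ) (n : ℕ) :
    ∑ t ∈ Finset.Icc (c - n + 1) c, g t = ∑ s ∈ Finset.range n, g (c - s) := by
  induction n with
  | zero => rw [Finset.Icc_eq_empty (by omega)]; simp
  | succ n ih =>
    have hset : Finset.Icc (c - (n + 1 : ℕ) + 1) c
        = insert (c - n) (Finset.Icc (c - (n : ℕ) + 1) c) := by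
      ext t
      simp only [Finset.mem_Icc, Finset.mem_insert]
      omega
    rw [hset, Finset.sum_insert (by simp only [Finset.mem_Icc]; omega), ih,
      Finset.sum_range_succ]
    rw [add_comm]

private lemma finsum_int_eq_sum_range (g : ℤ → M) (c : ℤ) (n : ℕ)
    (h : ∀ t, g t ≠ 0 → c - n + 1 ≤ t ∧ t ≤ c) :
    ∑ᶠ t, g t = ∑ s ∈ Finset.range n, g (c - s) := by
  rw [finsum_int_eq_sum_Icc g (c - n + 1) c h, sum_Icc_eq_sum_range]


def dy2 (i : ℕ) (B : ℤ → ℤ → M → M) : ℤ → ℤ → M → M :=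
  fun p q u => ((-1 : ℤ) ^ i * ichoose p i) • B (p - (i : ℤ)) q u

noncomputable def diag2 (B : ℤ → ℤ → M → M) : ℤ → M → M :=
  fun m u => ∑ᶠ t : ℤ, B t (m - 1 - t) u

noncomputable def divYZ (B : ℤ → ℤ → M → M) : ℤ → ℤ → M → M :=
  fun p q u => ∑ᶠ s : ℕ, B (p - 1 - (s : ℤ)) (q + (s : ℤ)) u

lemma dy2_zero (B : ℤ → ℤ → M → M) : dy2 0 B = B := by
  funext p q u
  simp [dy2, ichoose_zero_right]

lemma divYZ_apply (B : ℤ → ℤ → M → M) {u : M} {q₀ : ℤ}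
    (h : ∀ p' q' : ℤ, q₀ ≤ q' → B p' q' u = 0) (p q : ℤ) (n : ℕ) (hn : q₀ ≤ q + n) :
    divYZ B p q u = ∑ s ∈ Finset.range n, B (p - 1 - (s : ℤ)) (q + (s : ℤ)) u := by
  rw [divYZ]
  apply finsum_nat_eq_sum_range
  intro s hs
  by_contra hlt
  push_neg at hlt
  exact hs (h _ _ (by omega))

lemma mulYZ_divYZ (B : ℤ → ℤ → M → M) (hB : IsFieldSer2 B) : mulYZ (divYZ B) = B := by
  funext p q u
  obtain ⟨p₀, q₀, hb⟩ := hB u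
  have hq : ∀ p' q' : ℤ, q₀ ≤ q' → B p' q' u = 0 := fun p' q' h => hb p' q' (Or.inr h)
  set n : ℕ := (q₀ - q).toNat with hn
  have hqn : q₀ ≤ q + (n : ℤ) := by omega
  show divYZ B (p + 1) q u - divYZ B p (q + 1) u = B p q u
  set f : ℕ → M := fun s => B (p - (s : ℤ)) (q + (s : ℤ)) u with hf
  have h1 : divYZ B (p + 1) q u = ∑ s ∈ Finset.range (n + 1), f s := by
    rw [divYZ_apply B hq (p + 1) q (n + 1) (by omega)]
    apply Finset.sum_congr rfl
    intro s _
    show B (p + 1 - 1 - (s : ℤ)) (q + (s : ℤ)) u = _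
    congr 1
    ring
  have h2 : divYZ B p (q + 1) u = ∑ s ∈ Finset.range (n + 1), f (s + 1) := by
    rw [divYZ_apply B hq p (q + 1) (n + 1) (by omega)]
    apply Finset.sum_congr rfl
    intro s _
    show B (p - 1 - (s : ℤ)) (q + 1 + (s : ℤ)) u = B (p - ((s + 1 : ℕ) : ℤ)) (q + ((s + 1 : ℕ) : ℤ)) u
    congr 1 <;> push_cast <;> ring
  rw [h1, h2, ← Finset.sum_sub_distrib, Finset.sum_range_sub' f (n + 1)]
  have hf0 : f 0 = B p q u := by simp [hf]
  have hfn : f (n + 1) = 0 := hq _ _ (by push_cast; omega)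
  rw [hf0, hfn, sub_zero]

lemma divYZ_isField (B : ℤ → ℤ → M → M) (hB : IsFieldSer2 B)
    (hd : ∀ m u, diag2 B m u = 0) : IsFieldSer2 (divYZ B) := by
  intro u
  obtain ⟨p₀, q₀, hb⟩ := hB u
  have hq : ∀ p' q' : ℤ, q₀ ≤ q' → B p' q' u = 0 := fun p' q' h => hb p' q' (Or.inr h)
  refine ⟨p₀ + 1, q₀, fun p q hpq => ?_⟩
  rcases hpq with hp | hqq
  · have h0 := hd (p + q) u
    rw [diag2] at h0
    set n : ℕ := (q₀ - q).toNat with hn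
    have h1 : ∑ᶠ t : ℤ, B t (p + q - 1 - t) u
        = ∑ s ∈ Finset.range n, B (p - 1 - (s : ℤ)) (q + (s : ℤ)) u := by
      rw [finsum_int_eq_sum_range _ (p - 1) n ?_]
      · apply Finset.sum_congr rfl
        intro s _
        congr 1
        ring
      · intro t ht
        constructor
        · by_contra h; push_neg at h
          exact ht (hq _ _ (by omega))
        · by_contra h; push_neg at h
          exact ht (hb _ _ (Or.inl (by omega)))
    rw [divYZ_apply B hq p q n (by omega), ← h1, h0]
  · rw [divYZ]
    apply finsum_eq_zero_of_forall_eq_zero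
    intro s
    exact hq _ _ (by omega)

lemma divYZ_isLin (B : ℤ → ℤ → M → M) (hB : IsFieldSer2 B) (hl : IsLinSer2 (k := k) B) :
    IsLinSer2 (k := k) (divYZ B) := by
  intro p q
  constructor
  · intro u v
    obtain ⟨pu, qu, hu⟩ := hB u
    obtain ⟨pv, qv, hv⟩ := hB v
    set n : ℕ := (max qu qv - q).toNat with hn
    rw [divYZ_apply B (q₀ := max qu qv) (fun p' q' h => hu p' q' (Or.inr (by omega))) p q n (by omega),
      divYZ_apply B (q₀ := max qu qv) (fun p' q' h => hv p' q' (Or.inr (by omega))) p q n (by omega),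
      divYZ_apply B (u := u + v) (q₀ := max qu qv)
        (fun p' q' h => by
          rw [(hl p' q').map_add, hu p' q' (Or.inr (by omega)), hv p' q' (Or.inr (by omega)),
            add_zero]) p q n (by omega),
      ← Finset.sum_add_distrib]
    exact Finset.sum_congr rfl fun s _ => (hl _ _).map_add u v
  · intro c u
    obtain ⟨pu, qu, hu⟩ := hB u
    set n : ℕ := (qu - q).toNat with hn
    rw [divYZ_apply B (q₀ := qu) (fun p' q' h => hu p' q' (Or.inr (by omega))) p q n (by omega),
      divYZ_apply B (u := c • u) (q₀ := qu)
        (fun p' q' h => by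
          rw [(hl p' q').map_smul, hu p' q' (Or.inr (by omega)), smul_zero]) p q n (by omega),
      Finset.smul_sum]
    exact Finset.sum_congr rfl fun s _ => (hl _ _).map_smul c u


set_option linter.unusedSectionVars false

lemma diag2_mulYZ (X : ℤ → ℤ → M → M) (hX : IsFieldSer2 X) (m : ℤ) (u : M) :
    diag2 (mulYZ X) m u = 0 := by
  obtain ⟨p₀, q₀, hx⟩ := hX u
  rw [diag2]
  set n : ℕ := (p₀ + q₀ - m).toNat with hn
  set f : ℕ → M := fun s => X (p₀ - (s : ℤ)) (m - p₀ + (s : ℤ)) u with hf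
  rw [finsum_int_eq_sum_range _ (p₀ - 1) n ?_]
  · have hc : ∀ s ∈ Finset.range n, mulYZ X (p₀ - 1 - (s : ℤ)) (m - 1 - (p₀ - 1 - (s : ℤ))) u
        = f s - f (s + 1) := by
      intro s _
      show X (p₀ - 1 - (s : ℤ) + 1) (m - 1 - (p₀ - 1 - (s : ℤ))) u
          - X (p₀ - 1 - (s : ℤ)) (m - 1 - (p₀ - 1 - (s : ℤ)) + 1) u
        = X (p₀ - (s : ℤ)) (m - p₀ + (s : ℤ)) u
          - X (p₀ - ((s + 1 : ℕ) : ℤ)) (m - p₀ + ((s + 1 : ℕ) : ℤ)) u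
      congr 1 <;> [skip; skip] <;> congr 1 <;> push_cast <;> ring
    rw [Finset.sum_congr rfl hc, Finset.sum_range_sub' f n]
    have h1 : f 0 = 0 := hx _ _ (Or.inl (by omega))
    have h2 : f n = 0 := hx _ _ (Or.inr (by omega))
    rw [h1, h2, sub_zero]
  · intro t ht
    constructor
    · by_contra h
      push_neg at h
      refine ht ?_
      show X (t + 1) (m - 1 - t) u - X t (m - 1 - t + 1) u = 0
      rw [hx _ _ (Or.inr (by omega)), hx _ _ (Or.inr (by omega)), sub_zero]
    · by_contra h
      push_neg at h
      refine ht ?_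
      show X (t + 1) (m - 1 - t) u - X t (m - 1 - t + 1) u = 0
      rw [hx _ _ (Or.inl (by omega)), hx _ _ (Or.inl (by omega)), sub_zero]

lemma diag2_dy2_mulYZ (X : ℤ → ℤ → M → M) (hX : IsFieldSer2 X) (i : ℕ) (m : ℤ) (u : M) :
    diag2 (dy2 (i + 1) (mulYZ X)) m u = diag2 (dy2 i X) m u := by
  obtain ⟨p₀, q₀, hx⟩ := hX u
  set core : ℤ → M := fun t => X (t - (i : ℤ)) (m - 1 - t) u with hcore
  have hcz : ∀ t : ℤ, (p₀ + (i : ℤ) ≤ t ∨ t ≤ m - q₀ - 1) → core t = 0 := by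
    intro t ht
    rcases ht with h | h
    · exact hx _ _ (Or.inl (by omega))
    · exact hx _ _ (Or.inr (by omega))
  set a : ℤ → ℤ := fun t => (-1 : ℤ) ^ (i + 1) * ichoose t (i + 1) with ha
  set b : ℤ → ℤ := fun t => (-1 : ℤ) ^ i * ichoose t i with hb
  set c : ℤ := p₀ + (i : ℤ) with hc
  set n : ℕ := (p₀ + (i : ℤ) - m + 1 + q₀).toNat with hn
  have hL : diag2 (dy2 (i + 1) (mulYZ X)) m u
      = ∑ s ∈ Finset.range n, (a (c - s) • core (c - s) - a (c - s) • core (c - s - 1)) := by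
    rw [diag2, finsum_int_eq_sum_range _ c n ?_]
    · apply Finset.sum_congr rfl
      intro s _
      show a (c - (s : ℤ)) • (X (c - (s : ℤ) - ((i + 1 : ℕ) : ℤ) + 1) (m - 1 - (c - (s : ℤ))) u
          - X (c - (s : ℤ) - ((i + 1 : ℕ) : ℤ)) (m - 1 - (c - (s : ℤ)) + 1) u)
        = a (c - (s : ℤ)) • X (c - (s : ℤ) - (i : ℤ)) (m - 1 - (c - (s : ℤ))) u
          - a (c - (s : ℤ)) • X (c - (s : ℤ) - 1 - (i : ℤ)) (m - 1 - (c - (s : ℤ) - 1)) u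
      have A1 : c - (s : ℤ) - ((i + 1 : ℕ) : ℤ) + 1 = c - (s : ℤ) - (i : ℤ) := by push_cast; ring
      have A2 : c - (s : ℤ) - ((i + 1 : ℕ) : ℤ) = c - (s : ℤ) - 1 - (i : ℤ) := by push_cast; ring
      have A3 : m - 1 - (c - (s : ℤ)) + 1 = m - 1 - (c - (s : ℤ) - 1) := by ring
      rw [A1, A2, A3, smul_sub]
    · intro t ht
      constructor <;> by_contra h <;> push_neg at h <;> refine ht ?_
      · show a t • (X (t - ((i : ℕ) + 1 : ℕ) + 1) (m - 1 - t) u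
            - X (t - ((i : ℕ) + 1 : ℕ)) (m - 1 - t + 1) u) = 0
        rw [hx _ _ (Or.inr (by push_cast; omega)), hx _ _ (Or.inr (by push_cast; omega)),
          sub_zero, smul_zero]
      · show a t • (X (t - ((i : ℕ) + 1 : ℕ) + 1) (m - 1 - t) u
            - X (t - ((i : ℕ) + 1 : ℕ)) (m - 1 - t + 1) u) = 0
        rw [hx _ _ (Or.inl (by push_cast; omega)), hx _ _ (Or.inl (by push_cast; omega)),
          sub_zero, smul_zero]
  have hR : diag2 (dy2 i X) m u = ∑ s ∈ Finset.range n, b (c - s) • core (c - s) := by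
    rw [diag2, finsum_int_eq_sum_range _ c n ?_]
    · exact Finset.sum_congr rfl fun s _ => rfl
    · intro t ht
      constructor <;> by_contra h <;> push_neg at h <;> refine ht ?_
      · show b t • core t = 0
        rw [hcz t (Or.inr (by omega)), smul_zero]
      · show b t • core t = 0
        rw [hcz t (Or.inl (by omega)), smul_zero]
  rw [hL, hR]
  set F : ℕ → M := fun s => a (c - s + 1) • core (c - s) with hF
  have hsplit : ∀ s ∈ Finset.range n,
      a (c - s) • core (c - s) - a (c - s) • core (c - s - 1)
        = b (c - s) • core (c - s) + (F s - F (s + 1)) := by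
    intro s _
    have key : a (c - s) = b (c - s) + a (c - s + 1) := ichoose_pascal' (c - s) i
    have hF1 : F (s + 1) = a (c - s) • core (c - s - 1) := by
      show a (c - ((s + 1 : ℕ) : ℤ) + 1) • core (c - ((s + 1 : ℕ) : ℤ)) = _
      congr 1 <;> [skip; skip]
      · congr 1; push_cast; ring
      · congr 1; push_cast; ring
    rw [hF1, key, add_smul, hF]
    abel
  rw [Finset.sum_congr rfl hsplit, Finset.sum_add_distrib, Finset.sum_range_sub' F n]
  have h1 : F 0 = 0 := by
    show a (c - (0 : ℕ) + 1) • core (c - (0 : ℕ)) = 0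
    rw [hcz _ (Or.inl (by push_cast; omega)), smul_zero]
  have h2 : F n = 0 := by
    show a (c - (n : ℤ) + 1) • core (c - (n : ℤ)) = 0
    rw [hcz _ (Or.inr (by omega)), smul_zero]
  rw [h1, h2]
  abel

lemma divYZ_iter (N : ℕ) : ∀ B : ℤ → ℤ → M → M, IsFieldSer2 B → IsLinSer2 (k := k) B →
    (∀ r < N, ∀ m u, diag2 (dy2 r B) m u = 0) →
    IsFieldSer2 (divYZ^[N] B) ∧ IsLinSer2 (k := k) (divYZ^[N] B) ∧
      mulYZ^[N] (divYZ^[N] B) = B := by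
  induction N with
  | zero => intro B hB hl _; simpa using ⟨hB, hl⟩
  | succ N ih =>
    intro B hB hl hd
    have hd0 : ∀ m u, diag2 B m u = 0 := by
      intro m u
      have h := hd 0 (Nat.succ_pos N) m u
      rwa [dy2_zero] at h
    have hB1 : IsFieldSer2 (divYZ B) := divYZ_isField B hB hd0
    have hl1 : IsLinSer2 (k := k) (divYZ B) := divYZ_isLin B hB hl
    have hm1 : mulYZ (divYZ B) = B := mulYZ_divYZ B hB
    have hd1 : ∀ r < N, ∀ m u, diag2 (dy2 r (divYZ B)) m u = 0 := by
      intro r hr m u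
      have h := diag2_dy2_mulYZ (divYZ B) hB1 r m u
      rw [hm1] at h
      rw [← h]
      exact hd (r + 1) (by omega) m u
    obtain ⟨h1, h2, h3⟩ := ih (divYZ B) hB1 hl1 hd1
    rw [Function.iterate_succ_apply]
    exact ⟨h1, h2, by rw [Function.iterate_succ_apply', h3, hm1]⟩

lemma mulYZ_isField (S : ℤ → ℤ → M → M) (hS : IsFieldSer2 S) : IsFieldSer2 (mulYZ S) := by
  intro u
  obtain ⟨p₀, q₀, h⟩ := hS u
  refine ⟨p₀, q₀, fun p q hpq => ?_⟩
  show S (p + 1) q u - S p (q + 1) u = 0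
  rcases hpq with hp | hq
  · rw [h _ _ (Or.inl (by omega)), h _ _ (Or.inl (by omega)), sub_zero]
  · rw [h _ _ (Or.inr (by omega)), h _ _ (Or.inr (by omega)), sub_zero]

lemma mulYZ_eq_zero (S : ℤ → ℤ → M → M) (hS : IsFieldSer2 S)
    (h : ∀ p q u, mulYZ S p q u = 0) : ∀ p q u, S p q u = 0 := by
  intro p q u
  obtain ⟨p₀, q₀, hb⟩ := hS u
  have step : ∀ j : ℕ, S p q u = S (p - (j : ℤ)) (q + (j : ℤ)) u := by
    intro j
    induction j with
    | zero => simp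
    | succ j ih =>
      rw [ih]
      have h2 := h (p - (j : ℤ) - 1) (q + (j : ℤ)) u
      show S (p - (j : ℤ)) (q + (j : ℤ)) u = S (p - ((j + 1 : ℕ) : ℤ)) (q + ((j + 1 : ℕ) : ℤ)) u
      have e1 : p - (j : ℤ) - 1 + 1 = p - (j : ℤ) := by ring
      rw [mulYZ, e1, sub_eq_zero] at h2
      rw [h2]
      congr 1 <;> push_cast <;> ring
  rw [step (q₀ - q).toNat, hb _ _ (Or.inr (by omega))]

lemma mulYZ_iter_eq_zero : ∀ N : ℕ, ∀ S : ℤ → ℤ → M → M, IsFieldSer2 S →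
    (∀ p q u, (mulYZ^[N] S) p q u = 0) → ∀ p q u, S p q u = 0 := by
  intro N
  induction N with
  | zero => intro S _ h; exact h
  | succ N ih =>
    intro S hS h
    refine mulYZ_eq_zero S hS ?_
    refine ih (mulYZ S) (mulYZ_isField S hS) ?_
    intro p q u
    rw [← Function.iterate_succ_apply]
    exact h p q u

lemma mulYZ_iter_sub (N : ℕ) (X Y : ℤ → ℤ → M → M) :
    mulYZ^[N] (fun p q u => X p q u - Y p q u)
      = fun p q u => (mulYZ^[N] X) p q u - (mulYZ^[N] Y) p q u := by
  induction N with
  | zero => simp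
  | succ N ih =>
    rw [Function.iterate_succ_apply', Function.iterate_succ_apply',
      Function.iterate_succ_apply', ih]
    funext p q u
    show mulYZ _ p q u = _
    simp only [mulYZ]
    abel

lemma isField_sub (X Y : ℤ → ℤ → M → M) (hX : IsFieldSer2 X) (hY : IsFieldSer2 Y) :
    IsFieldSer2 (fun p q u => X p q u - Y p q u) := by
  intro u
  obtain ⟨a, b, h1⟩ := hX u
  obtain ⟨c, d, h2⟩ := hY u
  refine ⟨max a c, max b d, fun p q h => ?_⟩
  show X p q u - Y p q u = 0
  rcases h with h | h
  · rw [h1 _ _ (Or.inl (by omega)), h2 _ _ (Or.inl (by omega)), sub_zero]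
  · rw [h1 _ _ (Or.inr (by omega)), h2 _ _ (Or.inr (by omega)), sub_zero]


lemma taylorTerm_eq (A : ℤ → ℤ → M → M) (i : ℕ) (p q : ℤ) (u : M) :
    taylorTerm A i p q u =
      if 0 ≤ p + (i : ℤ) + 1 ∧ p + 1 ≤ 0 then
        ((-1 : ℤ) ^ ((p + (i : ℤ) + 1).toNat) * (i.choose (p + (i : ℤ) + 1).toNat : ℤ)) •
          diag2 (dy2 i A) (q + ((p + (i : ℤ) + 1).toNat : ℤ)) u
      else 0 := rfl

lemma taylorTerm_ne_zero {A : ℤ → ℤ → M → M} {i : ℕ} {p q : ℤ} {u : M}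
    (h : taylorTerm A i p q u ≠ 0) : 0 ≤ p + (i : ℤ) + 1 ∧ p + 1 ≤ 0 := by
  by_contra hc
  exact h (by rw [taylorTerm, if_neg hc])

lemma key_sum (i r : ℕ) :
    ∑ s ∈ Finset.range (i + 1), (-1 : ℤ) ^ (i - s) * (i.choose s : ℤ) * (s.choose r : ℤ)
      = if r = i then 1 else 0 := by
  rcases lt_or_ge i r with h | h
  · rw [if_neg (by omega)]
    apply Finset.sum_eq_zero
    intro s hs
    simp only [Finset.mem_range] at hs
    rw [Nat.choose_eq_zero_of_lt (by omega : s < r)]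
    push_cast; ring
  · have hsub : Finset.Ico r (i + 1) ⊆ Finset.range (i + 1) := by
      intro x hx
      simp only [Finset.mem_Ico] at hx
      simp only [Finset.mem_range]
      omega
    rw [← Finset.sum_subset hsub (by
      intro x hx hnx
      simp only [Finset.mem_range] at hx
      simp only [Finset.mem_Ico] at hnx
      rw [Nat.choose_eq_zero_of_lt (by omega : x < r)]
      push_cast; ring)]
    rw [Finset.sum_Ico_eq_sum_range]
    have he : ∀ j ∈ Finset.range (i + 1 - r),
        (-1 : ℤ) ^ (i - (r + j)) * (i.choose (r + j) : ℤ) * ((r + j).choose r : ℤ)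
          = (i.choose r : ℤ) * ((-1 : ℤ) ^ ((i - r) - j) * ((i - r).choose j : ℤ)) := by
      intro j hj
      simp only [Finset.mem_range] at hj
      have h1 : i.choose (r + j) * (r + j).choose r = i.choose r * (i - r).choose j := by
        have := Nat.choose_mul (n := i) (k := r + j) (s := r) (by omega)
        simpa using this
      have h2 : i - (r + j) = (i - r) - j := by omega
      rw [h2]
      have h1' : (i.choose (r + j) : ℤ) * ((r + j).choose r : ℤ)
          = (i.choose r : ℤ) * ((i - r).choose j : ℤ) := by exact_mod_cast h1
      push_cast
      linear_combination ((-1 : ℤ) ^ (i - r - j)) * h1' 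
    rw [Finset.sum_congr rfl he, ← Finset.mul_sum]
    have hrefl : ∑ j ∈ Finset.range (i + 1 - r),
        (-1 : ℤ) ^ ((i - r) - j) * ((i - r).choose j : ℤ)
          = ∑ j ∈ Finset.range (i - r + 1), (-1 : ℤ) ^ j * ((i - r).choose j : ℤ) := by
      have hn : i + 1 - r = (i - r) + 1 := by omega
      rw [hn]
      have := Finset.sum_range_reflect
        (fun j => (-1 : ℤ) ^ j * ((i - r).choose j : ℤ)) (i - r + 1)
      rw [← this]
      apply Finset.sum_congr rfl
      intro j hj
      simp only [Finset.mem_range] at hj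
      have e1 : i - r + 1 - 1 - j = i - r - j := by omega
      have e2 : (i - r).choose (i - r + 1 - 1 - j) = (i - r).choose j := by
        rw [e1, Nat.choose_symm (by omega)]
      rw [e2, e1]
    rw [hrefl, Int.alternating_sum_range_choose]
    rcases eq_or_ne r i with he' | hne
    · subst he'
      simp
    · rw [if_neg (by omega), if_neg (by omega), mul_zero]

lemma dy2_diag_support (A : ℤ → ℤ → M → M) {u : M} {p₀ q₀ : ℤ}
    (hb : ∀ p q : ℤ, (p₀ ≤ p ∨ q₀ ≤ q) → A p q u = 0) (i : ℕ) (m : ℤ) {a b : ℤ}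
    (ha : a ≤ m - q₀) (hbnd : p₀ + (i : ℤ) - 1 ≤ b) :
    diag2 (dy2 i A) m u = ∑ t ∈ Finset.Icc a b, dy2 i A t (m - 1 - t) u := by
  rw [diag2]
  apply finsum_int_eq_sum_Icc
  intro t ht
  constructor <;> by_contra h <;> push_neg at h <;> refine ht ?_ <;>
    show ((-1 : ℤ) ^ i * ichoose t i) • A (t - (i : ℤ)) (m - 1 - t) u = 0
  · rw [hb _ _ (Or.inr (by omega)), smul_zero]
  · rw [hb _ _ (Or.inl (by omega)), smul_zero]

lemma diag2_dy2_add (A : ℤ → ℤ → M → M) (hA : IsFieldSer2 A) (hlA : IsLinSer2 (k := k) A)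
    (i : ℕ) (m : ℤ) (u v : M) :
    diag2 (dy2 i A) m (u + v) = diag2 (dy2 i A) m u + diag2 (dy2 i A) m v := by
  obtain ⟨pu, qu, hu⟩ := hA u
  obtain ⟨pv, qv, hv⟩ := hA v
  have hu' : ∀ p q : ℤ, (max pu pv ≤ p ∨ max qu qv ≤ q) → A p q u = 0 := fun p q h =>
    hu p q (by rcases h with h | h; exacts [Or.inl (by omega), Or.inr (by omega)])
  have hv' : ∀ p q : ℤ, (max pu pv ≤ p ∨ max qu qv ≤ q) → A p q v = 0 := fun p q h =>
    hv p q (by rcases h with h | h; exacts [Or.inl (by omega), Or.inr (by omega)])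
  have huv : ∀ p q : ℤ, (max pu pv ≤ p ∨ max qu qv ≤ q) → A p q (u + v) = 0 := by
    intro p q h
    rw [(hlA p q).map_add, hu' p q h, hv' p q h, add_zero]
  rw [dy2_diag_support A huv i m (a := m - max qu qv) (b := max pu pv + (i : ℤ)) le_rfl
      (by omega),
    dy2_diag_support A hu' i m (a := m - max qu qv) (b := max pu pv + (i : ℤ)) le_rfl
      (by omega),
    dy2_diag_support A hv' i m (a := m - max qu qv) (b := max pu pv + (i : ℤ)) le_rfl
      (by omega),
    ← Finset.sum_add_distrib]
  apply Finset.sum_congr rfl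
  intro t _
  show ((-1 : ℤ) ^ i * ichoose t i) • A (t - (i : ℤ)) (m - 1 - t) (u + v) = _
  rw [(hlA _ _).map_add, smul_add]
  rfl

lemma diag2_dy2_smul (A : ℤ → ℤ → M → M) (hA : IsFieldSer2 A) (hlA : IsLinSer2 (k := k) A)
    (i : ℕ) (m : ℤ) (c : k) (u : M) :
    diag2 (dy2 i A) m (c • u) = c • diag2 (dy2 i A) m u := by
  obtain ⟨pu, qu, hu⟩ := hA u
  have hcu : ∀ p q : ℤ, (pu ≤ p ∨ qu ≤ q) → A p q (c • u) = 0 := by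
    intro p q h
    rw [(hlA p q).map_smul, hu p q h, smul_zero]
  rw [dy2_diag_support A hcu i m (a := m - qu) (b := pu + (i : ℤ)) le_rfl (by omega),
    dy2_diag_support A hu i m (a := m - qu) (b := pu + (i : ℤ)) le_rfl (by omega),
    Finset.smul_sum]
  apply Finset.sum_congr rfl
  intro t _
  show ((-1 : ℤ) ^ i * ichoose t i) • A (t - (i : ℤ)) (m - 1 - t) (c • u) = _
  rw [(hlA _ _).map_smul, smul_comm]
  rfl


lemma coeff_eq (r i s : ℕ) (hs : s ≤ i) :
    (-1 : ℤ) ^ r * ichoose ((r : ℤ) - 1 - (s : ℤ)) r * ((-1 : ℤ) ^ (i - s) * (i.choose (i - s) : ℤ))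
      = (-1 : ℤ) ^ (i - s) * (i.choose s : ℤ) * (s.choose r : ℤ) := by
  rcases lt_or_ge s r with h | h
  · rw [ichoose_of_nonneg _ (by omega),
      Nat.choose_eq_zero_of_lt (by omega : ((r : ℤ) - 1 - (s : ℤ)).toNat < r),
      Nat.choose_eq_zero_of_lt (by omega : s < r)]
    push_cast; ring
  · rw [ichoose_of_neg _ (by omega)]
    have e : ((r : ℤ) - 1 - ((r : ℤ) - 1 - (s : ℤ))).toNat = s := by omega
    rw [e, Nat.choose_symm hs]
    have h2 : ((-1 : ℤ)) ^ r * (-1) ^ r = 1 := by rw [← mul_pow]; norm_num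
    linear_combination ((s.choose r : ℤ) * (i.choose s : ℤ) * (-1 : ℤ) ^ (i - s)) * h2

lemma diag2_dy2_taylorTerm (A : ℤ → ℤ → M → M) (i r : ℕ) (m : ℤ) (u : M) :
    diag2 (dy2 r (taylorTerm A i)) m u
      = if r = i then diag2 (dy2 i A) m u else 0 := by
  rw [diag2, finsum_int_eq_sum_range _ ((r : ℤ) - 1) (i + 1) ?_]
  swap
  · intro t ht
    have h1 : taylorTerm A i (t - (r : ℤ)) (m - 1 - t) u ≠ 0 := by
      intro h0
      refine ht ?_
      show ((-1 : ℤ) ^ r * ichoose t r) • taylorTerm A i (t - (r : ℤ)) (m - 1 - t) u = 0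
      rw [h0, smul_zero]
    have h2 := taylorTerm_ne_zero h1
    constructor <;> omega
  have hterm : ∀ s ∈ Finset.range (i + 1),
      dy2 r (taylorTerm A i) ((r : ℤ) - 1 - (s : ℤ)) (m - 1 - ((r : ℤ) - 1 - (s : ℤ))) u
        = ((-1 : ℤ) ^ (i - s) * (i.choose s : ℤ) * (s.choose r : ℤ))
            • diag2 (dy2 i A) (m - (r : ℤ) + (i : ℤ)) u := by
    intro s hs
    simp only [Finset.mem_range] at hs
    have hp : (0 : ℤ) ≤ ((r : ℤ) - 1 - (s : ℤ) - (r : ℤ)) + (i : ℤ) + 1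
        ∧ ((r : ℤ) - 1 - (s : ℤ) - (r : ℤ)) + 1 ≤ 0 := by constructor <;> omega
    show ((-1 : ℤ) ^ r * ichoose ((r : ℤ) - 1 - (s : ℤ)) r)
        • taylorTerm A i ((r : ℤ) - 1 - (s : ℤ) - (r : ℤ)) (m - 1 - ((r : ℤ) - 1 - (s : ℤ))) u = _
    rw [taylorTerm_eq, if_pos hp]
    have hj : (((r : ℤ) - 1 - (s : ℤ) - (r : ℤ)) + (i : ℤ) + 1).toNat = i - s := by omega
    rw [hj]
    have hq : (m - 1 - ((r : ℤ) - 1 - (s : ℤ))) + ((i - s : ℕ) : ℤ) = m - (r : ℤ) + (i : ℤ) := by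
      omega
    rw [hq, smul_smul, coeff_eq r i s (by omega)]
  rw [Finset.sum_congr rfl hterm, ← Finset.sum_smul, key_sum i r]
  rcases eq_or_ne r i with he | hne
  · subst he
    have hm : m - (r : ℤ) + (r : ℤ) = m := by ring
    rw [if_pos rfl, if_pos rfl, hm, one_smul]
  · rw [if_neg hne, if_neg hne, zero_smul]


lemma diag2_dy2_bound (A : ℤ → ℤ → M → M) {u : M} {p₀ q₀ : ℤ}
    (hb : ∀ p q : ℤ, (p₀ ≤ p ∨ q₀ ≤ q) → A p q u = 0) (i : ℕ) (m : ℤ)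
    (hm : p₀ + q₀ + (i : ℤ) ≤ m) : diag2 (dy2 i A) m u = 0 := by
  rw [diag2]
  apply finsum_eq_zero_of_forall_eq_zero
  intro t
  show ((-1 : ℤ) ^ i * ichoose t i) • A (t - (i : ℤ)) (m - 1 - t) u = 0
  rcases le_or_gt (p₀ + (i : ℤ)) t with h | h
  · rw [hb _ _ (Or.inl (by omega)), smul_zero]
  · rw [hb _ _ (Or.inr (by omega)), smul_zero]

lemma taylorTerm_zero (A : ℤ → ℤ → M → M) {u : M} {p₀ q₀ : ℤ}
    (hb : ∀ p q : ℤ, (p₀ ≤ p ∨ q₀ ≤ q) → A p q u = 0) (i : ℕ) (p q : ℤ)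
    (h : 0 ≤ p ∨ p₀ + q₀ + (i : ℤ) ≤ q) : taylorTerm A i p q u = 0 := by
  rw [taylorTerm_eq]
  split
  · rename_i hc
    rcases h with h | h
    · exact absurd hc.2 (by omega)
    · rw [diag2_dy2_bound A hb i _ (by omega), smul_zero]
  · rfl

lemma taylorTerm_map_add (A : ℤ → ℤ → M → M) (hA : IsFieldSer2 A)
    (hlA : IsLinSer2 (k := k) A) (i : ℕ) (p q : ℤ) (u v : M) :
    taylorTerm A i p q (u + v) = taylorTerm A i p q u + taylorTerm A i p q v := by
  rw [taylorTerm_eq, taylorTerm_eq, taylorTerm_eq]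
  split
  · rw [diag2_dy2_add A hA hlA, smul_add]
  · rw [add_zero]

lemma taylorTerm_map_smul (A : ℤ → ℤ → M → M) (hA : IsFieldSer2 A)
    (hlA : IsLinSer2 (k := k) A) (i : ℕ) (p q : ℤ) (c : k) (u : M) :
    taylorTerm A i p q (c • u) = c • taylorTerm A i p q u := by
  rw [taylorTerm_eq, taylorTerm_eq]
  split
  · rw [diag2_dy2_smul A hA hlA, smul_comm]
  · rw [smul_zero]


/-- Taylor's formula for fields in two variables: for every positive integer `N` there
is a unique field `R_N(y,z)` with
`A(y,z) = ∑_{i<N} (∂_y^{(i)}A)|_{y=z} (y-z)^i + R_N(y,z)(y-z)^N`. -/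
theorem stmt12 (A : ℤ → ℤ → M → M) (hA : IsFieldSer2 A) (hlA : IsLinSer2 (k := k) A)
    (N : ℕ) (hN : 1 ≤ N) :
    ∃! R : ℤ → ℤ → M → M, (IsFieldSer2 R ∧ IsLinSer2 (k := k) R) ∧
      ∀ (p q : ℤ) (u : M),
        A p q u = (∑ i ∈ Finset.range N, taylorTerm A i p q u) + (mulYZ^[N] R) p q u := by
  classical
  obtain ⟨B, hBdef⟩ : ∃ B : ℤ → ℤ → M → M,
      B = fun p q u => A p q u - ∑ i ∈ Finset.range N, taylorTerm A i p q u := ⟨_, rfl⟩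
  have hBapp : ∀ p q u, B p q u = A p q u - ∑ i ∈ Finset.range N, taylorTerm A i p q u := by
    intro p q u; rw [hBdef]
  have hBf : IsFieldSer2 B := by
    intro u
    obtain ⟨p₀, q₀, hb⟩ := hA u
    refine ⟨max p₀ 0, max q₀ (p₀ + q₀ + N), fun p q h => ?_⟩
    rw [hBapp]
    have hA0 : A p q u = 0 := hb p q
      (by rcases h with h | h; exacts [Or.inl (by omega), Or.inr (by omega)])
    rw [hA0, Finset.sum_eq_zero, sub_zero]
    intro i hi
    simp only [Finset.mem_range] at hi
    refine taylorTerm_zero A hb i p q ?_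
    rcases h with h | h
    exacts [Or.inl (by omega), Or.inr (by omega)]
  have hBl : IsLinSer2 (k := k) B := by
    intro p q
    constructor
    · intro u v
      simp only [hBapp]
      rw [(hlA p q).map_add,
        Finset.sum_congr rfl (fun i _ => taylorTerm_map_add A hA hlA i p q u v),
        Finset.sum_add_distrib]
      abel
    · intro c u
      simp only [hBapp]
      rw [(hlA p q).map_smul,
        Finset.sum_congr rfl (fun i _ => taylorTerm_map_smul A hA hlA i p q c u),
        ← Finset.smul_sum, ← smul_sub]
  have hBd : ∀ r < N, ∀ m u, diag2 (dy2 r B) m u = 0 := by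
    intro r hr m u
    obtain ⟨p₀, q₀, hb⟩ := hA u
    set a : ℤ := min (m - q₀) ((r : ℤ) - N) with hadef
    set b : ℤ := max (p₀ + (r : ℤ) - 1) ((r : ℤ) - 1) with hbdef2
    have hmain : diag2 (dy2 r B) m u = ∑ t ∈ Finset.Icc a b, dy2 r B t (m - 1 - t) u := by
      rw [diag2]
      apply finsum_int_eq_sum_Icc
      intro t ht
      constructor <;> by_contra hcon <;> push_neg at hcon <;> refine ht ?_ <;>
        show ((-1 : ℤ) ^ r * ichoose t r) • B (t - (r : ℤ)) (m - 1 - t) u = 0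
      · have hz : B (t - (r : ℤ)) (m - 1 - t) u = 0 := by
          rw [hBapp, hb _ _ (Or.inr (by omega)), Finset.sum_eq_zero, sub_zero]
          intro i hi
          simp only [Finset.mem_range] at hi
          by_contra hne
          have h2 := taylorTerm_ne_zero hne
          omega
        rw [hz, smul_zero]
      · have hz : B (t - (r : ℤ)) (m - 1 - t) u = 0 := by
          rw [hBapp, hb _ _ (Or.inl (by omega)), Finset.sum_eq_zero, sub_zero]
          intro i hi
          simp only [Finset.mem_range] at hi
          by_contra hne
          have h2 := taylorTerm_ne_zero hne
          omega
        rw [hz, smul_zero]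
    have hsplit : ∀ t ∈ Finset.Icc a b, dy2 r B t (m - 1 - t) u
        = dy2 r A t (m - 1 - t) u
          - ∑ i ∈ Finset.range N, dy2 r (taylorTerm A i) t (m - 1 - t) u := by
      intro t _
      show ((-1 : ℤ) ^ r * ichoose t r) • B (t - (r : ℤ)) (m - 1 - t) u = _
      rw [hBapp, smul_sub, Finset.smul_sum]
      rfl
    rw [hmain, Finset.sum_congr rfl hsplit, Finset.sum_sub_distrib, Finset.sum_comm]
    have hA' : ∑ t ∈ Finset.Icc a b, dy2 r A t (m - 1 - t) u = diag2 (dy2 r A) m u :=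
      (dy2_diag_support A hb r m (by omega) (by omega)).symm
    have hT : ∀ i ∈ Finset.range N,
        ∑ t ∈ Finset.Icc a b, dy2 r (taylorTerm A i) t (m - 1 - t) u
          = diag2 (dy2 r (taylorTerm A i)) m u := by
      intro i hi
      simp only [Finset.mem_range] at hi
      symm
      rw [diag2]
      apply finsum_int_eq_sum_Icc
      intro t ht
      have h1 : taylorTerm A i (t - (r : ℤ)) (m - 1 - t) u ≠ 0 := by
        intro h0
        refine ht ?_
        show ((-1 : ℤ) ^ r * ichoose t r) • taylorTerm A i (t - (r : ℤ)) (m - 1 - t) u = 0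
        rw [h0, smul_zero]
      have h2 := taylorTerm_ne_zero h1
      constructor <;> omega
    rw [hA', Finset.sum_congr rfl hT,
      Finset.sum_congr rfl (fun i _ => diag2_dy2_taylorTerm A i r m u),
      Finset.sum_ite_eq (Finset.range N) r (fun i => diag2 (dy2 i A) m u),
      if_pos (Finset.mem_range.mpr hr), sub_self]
  obtain ⟨hRf, hRl, hRm⟩ := divYZ_iter N B hBf hBl hBd
  refine ⟨divYZ^[N] B, ⟨⟨hRf, hRl⟩, fun p q u => ?_⟩, fun R' hR' => ?_⟩
  · rw [hRm, hBapp]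
    abel
  · obtain ⟨⟨hf', hl'⟩, he'⟩ := hR'
    have hmul' : ∀ p q u, (mulYZ^[N] R') p q u = B p q u := by
      intro p q u
      rw [hBapp, he' p q u]
      abel
    have hzero : ∀ p q u,
        (mulYZ^[N] (fun p q u => R' p q u - (divYZ^[N] B) p q u)) p q u = 0 := by
      intro p q u
      rw [mulYZ_iter_sub]
      show (mulYZ^[N] R') p q u - (mulYZ^[N] (divYZ^[N] B)) p q u = 0
      rw [hmul' p q u, hRm, sub_self]
    have hfin := mulYZ_iter_eq_zero N _ (isField_sub R' (divYZ^[N] B) hf' hRf) hzero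
    funext p q u
    have h : R' p q u - (divYZ^[N] B) p q u = 0 := hfin p q u
    exact sub_eq_zero.mp h


end VA
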